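/- Let a < b be real numbers and let ψ : (a, b) → ℝ be an upper semicontinuous viscosity subsolution of the one-variable subequation 'λ ≥ 0 or a ≥ 0'; that is, for every t₀ ∈ (a, b) and every C² function φ defined near t₀ with ψ ≤ φ near t₀ and ψ(t₀) = φ(t₀), one has φ′(t₀) ≥ 0 or φ″(t₀) ≥ 0. Then one of the following holds: (1) ψ is nondecreasing on (a, b); or (2) ψ is nonincreasing and convex on (a, b); or (3) there exists c ∈ (a, b) such that ψ is nonincreasing and convex on (a, c) and nondecreasing on (c, b). -/

import Mathlib

open Set Filter Topology

noncomputable section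

lemma usc_exists_max {f : ℝ → ℝ} {s t : ℝ} (hst : s ≤ t)
    (hf : UpperSemicontinuousOn f (Icc s t)) :
    ∃ m ∈ Icc s t, ∀ x ∈ Icc s t, f x ≤ f m := by
  set K : Set ℝ := Icc s t with hK
  have hKne : K.Nonempty := nonempty_Icc.mpr hst
  have hKc : IsCompact K := isCompact_Icc
  set C : ℝ → Set ℝ := fun y => {x ∈ K | y ≤ f x} with hC
  have hCcl : ∀ y, IsClosed (C y) := by
    intro y
    rw [← isOpen_compl_iff]
    rw [isOpen_iff_mem_nhds]
    intro x hx
    by_cases hxK : x ∈ K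
    · have hfx : f x < y := by
        by_contra h
        exact hx ⟨hxK, le_of_not_gt h⟩
      have h1 : ∀ᶠ z in 𝓝[K] x, f z < y := hf x hxK y hfx
      have h2 : ∀ᶠ z in 𝓝 x, z ∉ K → z ∈ (C y)ᶜ := by
        filter_upwards with z hz hz2
        exact hz hz2.1
      have h3 : ∀ᶠ z in 𝓝[K] x, z ∈ (C y)ᶜ := by
        filter_upwards [h1] with z hz hz2
        exact absurd hz2.2 (not_le.mpr hz)
      rw [eventually_nhdsWithin_iff] at h3
      filter_upwards [h2, h3] with z h2 h3
      by_cases hzK : z ∈ K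
      · exact h3 hzK
      · exact h2 hzK
    · have : Kᶜ ∈ 𝓝 x := (isClosed_Icc (a := s) (b := t)).isOpen_compl.mem_nhds hxK
      filter_upwards [this] with z hz hz2
      exact hz hz2.1
  have hCcomp : ∀ y, IsCompact (C y) := fun y =>
    hKc.of_isClosed_subset (hCcl y) (fun x hx => hx.1)
  haveI : Nonempty K := hKne.to_subtype
  have hdir : Directed (· ⊇ ·) (fun x : K => C (f x)) := by
    intro x₁ x₂
    rcases le_total (f x₁) (f x₂) with h | h
    · exact ⟨x₂, fun z hz => ⟨hz.1, h.trans hz.2⟩, fun z hz => hz⟩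
    · exact ⟨x₁, fun z hz => hz, fun z hz => ⟨hz.1, h.trans hz.2⟩⟩
  have hne : ∀ x : K, (C (f x)).Nonempty := fun x => ⟨x, x.2, le_refl _⟩
  obtain ⟨m, hm⟩ := IsCompact.nonempty_iInter_of_directed_nonempty_isCompact_isClosed
    (fun x : K => C (f x)) hdir hne (fun x => hCcomp _) (fun x => hCcl _)
  simp only [mem_iInter] at hm
  have hmK : m ∈ K := (hm ⟨hKne.some, hKne.some_mem⟩).1
  exact ⟨m, hmK, fun x hx => (hm ⟨x, hx⟩).2⟩

lemma star_lemma {a b : ℝ} {ψ : ℝ → ℝ}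
    (husc : UpperSemicontinuousOn ψ (Set.Ioo a b))
    (hsub : ∀ t₀ ∈ Set.Ioo a b, ∀ φ : ℝ → ℝ, ContDiffAt ℝ 2 φ t₀ →
      (∀ᶠ t in 𝓝[Set.Ioo a b] t₀, ψ t ≤ φ t) → ψ t₀ = φ t₀ →
      0 ≤ deriv φ t₀ ∨ 0 ≤ deriv (deriv φ) t₀)
    {s t : ℝ} (has : a < s) (hst : s < t) (htb : t < b) {p : ℝ} (hp : p ≤ 0) :
    ∀ x ∈ Icc s t, ψ x ≤ max (ψ s + p * (x - s)) (ψ t + p * (x - t)) := by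
  by_contra h
  push_neg at h
  obtain ⟨x₀, hx₀, hgt⟩ := h
  rw [max_lt_iff] at hgt
  obtain ⟨h1, h2⟩ := hgt
  have hx₀s : s < x₀ := by
    rcases lt_or_eq_of_le hx₀.1 with h | h
    · exact h
    · exfalso; rw [← h] at h1; simp only [sub_self, mul_zero, add_zero] at h1
      exact lt_irrefl _ h1
  have hx₀t : x₀ < t := by
    rcases lt_or_eq_of_le hx₀.2 with h | h
    · exact h
    · exfalso; rw [h] at h2; simp only [sub_self, mul_zero, add_zero] at h2
      exact lt_irrefl _ h2
  set A : ℝ := ψ x₀ - (ψ t + p * (x₀ - t)) with hA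
  have hApos : 0 < A := by simp [hA]; linarith
  have hexp : Real.exp x₀ < Real.exp t := Real.exp_lt_exp.mpr hx₀t
  set δ : ℝ := A / (2 * (Real.exp t - Real.exp x₀)) with hδdef
  have hδpos : 0 < δ := div_pos hApos (by linarith)
  have hE : (0:ℝ) < Real.exp t - Real.exp x₀ := by linarith
  have hδval : δ * (Real.exp t - Real.exp x₀) = A / 2 := by
    have hδ2 : δ = A / 2 / (Real.exp t - Real.exp x₀) := by rw [hδdef, div_div]
    rw [hδ2, div_mul_cancel₀ _ (ne_of_gt hE)]
  set g : ℝ → ℝ := fun y => ψ y + (δ * Real.exp y - p * y) with hg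
  have hIccsub : Icc s t ⊆ Ioo a b := fun y hy => ⟨lt_of_lt_of_le has hy.1, lt_of_le_of_lt hy.2 htb⟩
  have hgusc : UpperSemicontinuousOn g (Icc s t) := by
    apply UpperSemicontinuousOn.add (husc.mono hIccsub)
    exact (Continuous.continuousOn (by continuity)).upperSemicontinuousOn
  obtain ⟨m, hm, hmax⟩ := usc_exists_max hst.le hgusc
  have hgs : g s < g x₀ := by
    simp only [hg]
    have : Real.exp s < Real.exp x₀ := Real.exp_lt_exp.mpr hx₀s
    nlinarith [hδpos]
  have hgt' : g t < g x₀ := by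
    simp only [hg]
    nlinarith [hδval, hApos]
  have hgm : g x₀ ≤ g m := hmax x₀ hx₀
  have hms : s < m := by
    rcases lt_or_eq_of_le hm.1 with h | h
    · exact h
    · exfalso; rw [← h] at hgm; linarith
  have hmt : m < t := by
    rcases lt_or_eq_of_le hm.2 with h | h
    · exact h
    · exfalso; rw [h] at hgm; linarith
  set φ : ℝ → ℝ := fun y => p * y - δ * Real.exp y + g m with hφ
  have hmab : m ∈ Ioo a b := hIccsub hm
  have hcd : ContDiffAt ℝ 2 φ m := by
    apply ContDiff.contDiffAt
    exact ((contDiff_const.mul contDiff_id).sub (contDiff_const.mul Real.contDiff_exp)).add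
      contDiff_const
  have hev : ∀ᶠ y in 𝓝[Set.Ioo a b] m, ψ y ≤ φ y := by
    apply Filter.Eventually.filter_mono nhdsWithin_le_nhds
    filter_upwards [isOpen_Ioo.mem_nhds (show m ∈ Ioo s t from ⟨hms, hmt⟩)] with y hy
    have hgy := hmax y (Ioo_subset_Icc_self hy)
    simp only [hg] at hgy
    simp only [hφ, hg]
    linarith
  have heq : ψ m = φ m := by
    simp only [hφ, hg]
    ring
  have hd1 : ∀ y, HasDerivAt φ (p - δ * Real.exp y) y := by
    intro y
    have h1 : HasDerivAt (fun y : ℝ => p * y) (p * 1) y := (hasDerivAt_id y).const_mul p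
    have h2 : HasDerivAt (fun y : ℝ => δ * Real.exp y) (δ * Real.exp y) y :=
      (Real.hasDerivAt_exp y).const_mul δ
    have := (h1.sub h2).add_const (g m)
    have e : (p * 1 - δ * Real.exp y) = p - δ * Real.exp y := by ring
    rw [e] at this
    exact this
  have hderiv : deriv φ = fun y => p - δ * Real.exp y := funext fun y => (hd1 y).deriv
  have hd2 : deriv (deriv φ) m = -(δ * Real.exp m) := by
    rw [hderiv]
    have h2 : HasDerivAt (fun y : ℝ => δ * Real.exp y) (δ * Real.exp m) m :=
      (Real.hasDerivAt_exp m).const_mul δ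
    have := (hasDerivAt_const m p).sub h2
    rw [show (fun y => p - δ * Real.exp y) = ((fun x => p) - fun y => δ * Real.exp y) from rfl, this.deriv]
    ring
  have hexppos : 0 < Real.exp m := Real.exp_pos m
  rcases hsub m hmab φ hcd hev heq with h | h
  · rw [(hd1 m).deriv] at h
    nlinarith
  · rw [hd2] at h
    nlinarith

/-- The Increasing/Decreasing dichotomy for viscosity subsolutions of the
one-variable subaffine subequation `λ ≥ 0 or a ≥ 0` on an interval `(a, b)`:
either `ψ` is nondecreasing, or nonincreasing and convex, or nonincreasing and
convex up to some `c` and nondecreasing afterwards. -/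
theorem stmt19 (a b : ℝ) (hab : a < b) (ψ : ℝ → ℝ)
    (husc : UpperSemicontinuousOn ψ (Set.Ioo a b))
    (hsub : ∀ t₀ ∈ Set.Ioo a b, ∀ φ : ℝ → ℝ, ContDiffAt ℝ 2 φ t₀ →
      (∀ᶠ t in 𝓝[Set.Ioo a b] t₀, ψ t ≤ φ t) → ψ t₀ = φ t₀ →
      0 ≤ deriv φ t₀ ∨ 0 ≤ deriv (deriv φ) t₀) :
    MonotoneOn ψ (Set.Ioo a b) ∨
    (AntitoneOn ψ (Set.Ioo a b) ∧ ConvexOn ℝ (Set.Ioo a b) ψ) ∨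
    (∃ c ∈ Set.Ioo a b, AntitoneOn ψ (Set.Ioo a c) ∧ ConvexOn ℝ (Set.Ioo a c) ψ ∧
      MonotoneOn ψ (Set.Ioo c b)) := by
  -- the key "no interior max / chord" inequality
  have star := fun {s t : ℝ} (has : a < s) (hst : s < t) (htb : t < b) {p : ℝ} (hp : p ≤ 0) =>
    star_lemma husc hsub has hst htb hp
  -- antitone on (a, d) given no monotonicity to the right below d
  have anti : ∀ d : ℝ, d ≤ b →
      (∀ v ∈ Ioo a b, v < d → ¬ MonotoneOn ψ (Ioo v b)) → AntitoneOn ψ (Ioo a d) := by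
    intro d hdb hno u hu v hv huv
    rcases eq_or_lt_of_le huv with rfl | huv
    · exact le_refl _
    by_contra hcon
    push_neg at hcon
    have hv' : v ∈ Ioo a b := ⟨hv.1, lt_of_lt_of_le hv.2 hdb⟩
    have hnm := hno v hv' hv.2
    rw [MonotoneOn] at hnm
    push_neg at hnm
    obtain ⟨s, hs, t, ht, hst, hψst⟩ := hnm
    have hst' : s < t := by
      rcases eq_or_lt_of_le hst with rfl | h
      · exact absurd hψst (lt_irrefl _)
      · exact h
    -- max of ψ on [u, t]
    have hut : u < t := lt_trans (lt_trans huv hs.1) hst'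
    have hsubset : Icc u t ⊆ Ioo a b := fun y hy =>
      ⟨lt_of_lt_of_le hu.1 hy.1, lt_of_le_of_lt hy.2 ht.2⟩
    obtain ⟨m, hm, hmax⟩ := usc_exists_max hut.le (husc.mono hsubset)
    have h1 : ψ v ≤ ψ m := hmax v ⟨huv.le, le_trans (le_trans hs.1.le hst) (le_refl t)⟩
    have h2 : ψ s ≤ ψ m := hmax s ⟨(lt_trans huv hs.1).le, hst⟩
    have := star hu.1 hut (lt_of_le_of_lt (le_refl t) ht.2) (le_refl 0) m hm
    simp only [zero_mul, add_zero] at this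
    rcases le_max_iff.mp this with hc | hc
    · linarith
    · linarith
  -- convexity on (a, d) given antitonicity there
  have conv : ∀ d : ℝ, d ≤ b → AntitoneOn ψ (Ioo a d) → ConvexOn ℝ (Ioo a d) ψ := by
    intro d hdb hanti
    have key : ∀ u ∈ Ioo a d, ∀ v ∈ Ioo a d, u < v → ∀ θ η : ℝ, 0 ≤ θ → 0 ≤ η → θ + η = 1 →
        ψ (θ * u + η * v) ≤ θ * ψ u + η * ψ v := by
      intro u hu v hv huv θ η hθ hη hθη
      set p : ℝ := (ψ v - ψ u) / (v - u) with hp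
      have hvu : (0:ℝ) < v - u := by linarith
      have hψvu : ψ v ≤ ψ u := hanti hu hv huv.le
      have hple : p ≤ 0 := div_nonpos_of_nonpos_of_nonneg (by linarith) hvu.le
      set x : ℝ := θ * u + η * v with hx
      have hθ1 : θ = 1 - η := by linarith
      have hη1 : η = 1 - θ := by linarith
      have hxmem : x ∈ Icc u v := by
        constructor
        · simp only [hx]; rw [hθ1]; nlinarith [mul_nonneg hη hvu.le]
        · simp only [hx]; rw [hη1]; nlinarith [mul_nonneg hθ hvu.le]
      have hvb : v < b := lt_of_lt_of_le hv.2 hdb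
      have := star hu.1 huv hvb hple x hxmem
      have heq1 : ψ u + p * (x - u) = θ * ψ u + η * ψ v := by
        have hxu : x - u = η * (v - u) := by simp only [hx]; rw [hθ1]; ring
        have hp1 : p * (η * (v - u)) = η * (ψ v - ψ u) := by
          rw [hp]; field_simp
        rw [hxu, hp1, hθ1]; ring
      have heq2 : ψ v + p * (x - v) = θ * ψ u + η * ψ v := by
        have hxv : x - v = -(θ * (v - u)) := by simp only [hx]; rw [hη1]; ring
        have hp2 : p * (-(θ * (v - u))) = -(θ * (ψ v - ψ u)) := by
          rw [hp]; field_simp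
        rw [hxv, hp2, hη1]; ring
      rw [heq1, heq2, max_self] at this
      exact this
    constructor
    · exact convex_Ioo a d
    · intro u hu v hv θ η hθ hη hθη
      rcases lt_trichotomy u v with h | h | h
      · exact key u hu v hv h θ η hθ hη hθη
      · subst h
        simp only [smul_eq_mul]
        have h1 : θ * u + η * u = u := by rw [← add_mul, hθη, one_mul]
        have h2 : θ * ψ u + η * ψ u = ψ u := by rw [← add_mul, hθη, one_mul]
        rw [h1, h2]
      · have := key v hv u hu h η θ hη hθ (by linarith)
        simp only [smul_eq_mul]
        calc ψ (θ * u + η * v) = ψ (η * v + θ * u) := by ring_nf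
          _ ≤ η * ψ v + θ * ψ u := this
          _ = θ * ψ u + η * ψ v := by ring
  -- the set of points from which ψ is nondecreasing
  set S : Set ℝ := {t ∈ Ioo a b | MonotoneOn ψ (Ioo t b)} with hS
  by_cases hSne : S.Nonempty
  · set c : ℝ := sInf S with hc
    have hSbdd : BddBelow S := ⟨a, fun x hx => hx.1.1.le⟩
    have hca : a ≤ c := le_csInf hSne (fun x hx => hx.1.1.le)
    have hcb : c < b := lt_of_le_of_lt (csInf_le hSbdd hSne.some_mem) hSne.some_mem.1.2
    have hmono_after : ∀ u ∈ Ioo c b, ∀ v ∈ Ioo c b, u ≤ v → ψ u ≤ ψ v := by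
      intro u hu v hv huv
      obtain ⟨t₀, ht₀S, ht₀u⟩ := exists_lt_of_csInf_lt hSne hu.1
      exact ht₀S.2 ⟨ht₀u, hu.2⟩ ⟨lt_of_lt_of_le ht₀u huv, hv.2⟩ huv
    rcases eq_or_lt_of_le hca with heq | hac
    · -- c = a : ψ is monotone on all of (a,b)
      exact Or.inl (fun u hu v hv huv =>
        hmono_after u ⟨heq ▸ hu.1, hu.2⟩ v ⟨heq ▸ hv.1, hv.2⟩ huv)
    · -- a < c < b : case 3
      refine Or.inr (Or.inr ⟨c, ⟨hac, hcb⟩, ?_, ?_, fun u hu v hv huv => hmono_after u hu v hv huv⟩)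
      · apply anti c hcb.le
        intro v hv hvc hmono
        have : c ≤ v := csInf_le hSbdd ⟨hv, hmono⟩
        linarith
      · apply conv c hcb.le
        apply anti c hcb.le
        intro v hv hvc hmono
        have : c ≤ v := csInf_le hSbdd ⟨hv, hmono⟩
        linarith
  · -- S empty : ψ antitone and convex on (a,b)
    have hanti : AntitoneOn ψ (Ioo a b) := by
      apply anti b (le_refl b)
      intro v hv _ hmono
      exact hSne ⟨v, hv, hmono⟩
    exact Or.inr (Or.inl ⟨hanti, conv b (le_refl b) hanti⟩)

end
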